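/- The function g(δ) = (1-δ)·[Φ((1/3)(y_δ + 2√(y_δ²+6 ln 2))) - Φ((1/3)(2 y_δ + √(y_δ²+6 ln 2)))], where y_δ = Φ⁻¹(δ/(1-δ)), is strictly decreasing for δ ∈ (0, 1/3). Consequently, δ < g(δ) if and only if δ < ε₀, where ε₀ is the unique fixed point of g. -/

import Mathlib

open MeasureTheory ProbabilityTheory

/-- The standard normal cumulative distribution function. -/
noncomputable def Phi (x : ℝ) : ℝ := ((gaussianReal 0 1) (Set.Iic x)).toReal

/-- The inverse of the standard normal CDF. -/
noncomputable def PhiInv : ℝ → ℝ := Function.invFun Phi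

/-- The normal quantile `y_δ = Φ⁻¹(δ/(1-δ))`. -/
noncomputable def yq (δ : ℝ) : ℝ := PhiInv (δ / (1 - δ))

/-- The function `g` from the location-scale breakdown analysis. -/
noncomputable def gfun (δ : ℝ) : ℝ :=
  (1 - δ) *
    (Phi ((yq δ + 2 * Real.sqrt (yq δ ^ 2 + 6 * Real.log 2)) / 3) -
      Phi ((2 * yq δ + Real.sqrt (yq δ ^ 2 + 6 * Real.log 2)) / 3))

open Set Filter Real Topology

lemma pdf_cont : Continuous (gaussianPDFReal 0 1) := by
  unfold gaussianPDFReal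
  fun_prop

lemma pdf_pos (x : ℝ) : 0 < gaussianPDFReal 0 1 x := gaussianPDFReal_pos 0 1 x one_ne_zero

lemma Phi_eq (x : ℝ) : Phi x = ∫ t in Set.Iic x, gaussianPDFReal 0 1 t := by
  rw [Phi, gaussianReal_apply_eq_integral 0 one_ne_zero,
    ENNReal.toReal_ofReal (integral_nonneg fun t => gaussianPDFReal_nonneg 0 1 t)]

lemma Phi_sub (a b : ℝ) : Phi b - Phi a = ∫ t in a..b, gaussianPDFReal 0 1 t := by
  rw [Phi_eq, Phi_eq]
  exact intervalIntegral.integral_Iic_sub_Iic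
    ((integrable_gaussianPDFReal 0 1).integrableOn)
    ((integrable_gaussianPDFReal 0 1).integrableOn)

lemma hasDerivAt_Phi (x : ℝ) : HasDerivAt Phi (gaussianPDFReal 0 1 x) x := by
  have h : Phi = fun u => Phi 0 + ∫ t in (0:ℝ)..u, gaussianPDFReal 0 1 t := by
    funext u; rw [← Phi_sub]; ring
  rw [h]
  exact (intervalIntegral.integral_hasDerivAt_right
    ((integrable_gaussianPDFReal 0 1).intervalIntegrable)
    (pdf_cont.stronglyMeasurable.stronglyMeasurableAtFilter)
    pdf_cont.continuousAt).const_add _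

lemma Phi_cont : Continuous Phi :=
  continuous_iff_continuousAt.2 fun x => (hasDerivAt_Phi x).continuousAt

lemma Phi_strictMono : StrictMono Phi :=
  strictMono_of_hasDerivAt_pos hasDerivAt_Phi pdf_pos

lemma Phi_tendsto_one : Tendsto Phi atTop (𝓝 1) := by
  have h := tendsto_measure_Iic_atTop (gaussianReal 0 1)
  rw [measure_univ] at h
  have h2 := (ENNReal.tendsto_toReal ENNReal.one_ne_top).comp h
  exact h2

lemma Phi_tendsto_zero : Tendsto Phi atBot (𝓝 0) := by
  have h : Tendsto (fun x : ℝ => ∫ t in x..(0:ℝ), gaussianPDFReal 0 1 t) atBot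
      (𝓝 (∫ t in Set.Iic (0:ℝ), gaussianPDFReal 0 1 t)) :=
    intervalIntegral_tendsto_integral_Iic 0
      (integrable_gaussianPDFReal 0 1).integrableOn tendsto_id
  have h0 : (0:ℝ) = Phi 0 - ∫ t in Set.Iic (0:ℝ), gaussianPDFReal 0 1 t := by
    rw [← Phi_eq]; ring
  rw [h0]
  exact (tendsto_const_nhds.sub h).congr fun x => by rw [← Phi_sub]; ring

lemma Phi_invFun {p : ℝ} (h0 : 0 < p) (h1 : p < 1) : Phi (PhiInv p) = p := by
  apply Function.invFun_eq
  obtain ⟨a, ha⟩ : ∃ a, Phi a < p := (Phi_tendsto_zero.eventually_lt_const h0).exists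
  obtain ⟨b, hb⟩ : ∃ b, p < Phi b := (Phi_tendsto_one.eventually_const_lt h1).exists
  obtain ⟨x, hx⟩ := intermediate_value_univ a b Phi_cont ⟨ha.le, hb.le⟩
  exact ⟨x, hx⟩

noncomputable def sfun (y : ℝ) : ℝ := Real.sqrt (y ^ 2 + 6 * Real.log 2)

lemma log2_pos : 0 < Real.log 2 := Real.log_pos one_lt_two

lemma arg_pos (y : ℝ) : 0 < y ^ 2 + 6 * Real.log 2 := by nlinarith [log2_pos, sq_nonneg y]

lemma sq_sfun (y : ℝ) : sfun y ^ 2 = y ^ 2 + 6 * Real.log 2 :=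
  Real.sq_sqrt (arg_pos y).le

lemma sfun_nonneg (y : ℝ) : 0 ≤ sfun y := Real.sqrt_nonneg _

lemma lt_sfun (y : ℝ) : y < sfun y := by
  nlinarith [sq_sfun y, sfun_nonneg y, log2_pos]

lemma sfun_pos (y : ℝ) : 0 < sfun y := by
  nlinarith [sq_sfun y, sfun_nonneg y, log2_pos]

lemma hasDerivAt_sfun (y : ℝ) : HasDerivAt sfun (y / sfun y) y := by
  have h : HasDerivAt (fun y : ℝ => y ^ 2 + 6 * Real.log 2) (2 * y) y := by
    simpa using (hasDerivAt_pow 2 y).add_const (6 * Real.log 2)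
  have h2 := h.sqrt (arg_pos y).ne'
  have : 2 * y / (2 * Real.sqrt (y ^ 2 + 6 * Real.log 2)) = y / sfun y := by
    rw [mul_div_mul_left _ _ (two_ne_zero)]; rfl
  rw [this] at h2
  exact h2

lemma phi_rel (y : ℝ) :
    gaussianPDFReal 0 1 ((2 * y + sfun y) / 3) =
      2 * gaussianPDFReal 0 1 ((y + 2 * sfun y) / 3) := by
  have hs := sq_sfun y
  unfold gaussianPDFReal
  simp only [NNReal.coe_one, mul_one, sub_zero]
  have key : rexp (-((2 * y + sfun y) / 3) ^ 2 / 2) =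
      2 * rexp (-((y + 2 * sfun y) / 3) ^ 2 / 2) := by
    have e : -((2 * y + sfun y) / 3) ^ 2 / 2 =
        Real.log 2 + -((y + 2 * sfun y) / 3) ^ 2 / 2 := by linear_combination hs / 6
    rw [e, Real.exp_add, Real.exp_log two_pos]
  rw [key]; ring

noncomputable def Ffun (y : ℝ) : ℝ :=
  Phi ((y + 2 * sfun y) / 3) - Phi ((2 * y + sfun y) / 3)

lemma hasDerivAt_Ffun (y : ℝ) :
    HasDerivAt Ffun (-(gaussianPDFReal 0 1 ((y + 2 * sfun y) / 3))) y := by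
  have hs0 : sfun y ≠ 0 := (sfun_pos y).ne'
  have hds := hasDerivAt_sfun y
  have ha : HasDerivAt (fun y : ℝ => (y + 2 * sfun y) / 3) ((1 + 2 * (y / sfun y)) / 3) y :=
    ((hasDerivAt_id y).add (hds.const_mul 2)).div_const 3
  have hb : HasDerivAt (fun y : ℝ => (2 * y + sfun y) / 3) ((2 + y / sfun y) / 3) y := by
    have := (((hasDerivAt_id y).const_mul 2).add hds).div_const 3
    simpa using this
  have hA := (hasDerivAt_Phi ((y + 2 * sfun y) / 3)).comp y ha
  have hB := (hasDerivAt_Phi ((2 * y + sfun y) / 3)).comp y hb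
  have H := hA.sub hB
  have funeq : (fun y => (Phi ∘ fun y : ℝ => (y + 2 * sfun y) / 3) y -
      (Phi ∘ fun y : ℝ => (2 * y + sfun y) / 3) y) = Ffun := rfl
  change HasDerivAt Ffun _ y at H
  convert H using 1
  rw [phi_rel y]
  field_simp
  ring

lemma strictAnti_Ffun : StrictAnti Ffun :=
  strictAnti_of_hasDerivAt_neg hasDerivAt_Ffun
    fun y => neg_lt_zero.2 (pdf_pos _)

lemma Ffun_pos (y : ℝ) : 0 < Ffun y := by
  have h : (2 * y + sfun y) / 3 < (y + 2 * sfun y) / 3 := by linarith [lt_sfun y]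
  exact sub_pos.2 (Phi_strictMono h)

lemma gfun_eq (δ : ℝ) : gfun δ = (1 - δ) * Ffun (yq δ) := rfl

lemma yq_lt_yq {δ₁ δ₂ : ℝ} (h₁ : δ₁ ∈ Set.Ioo (0:ℝ) (1/3)) (h₂ : δ₂ ∈ Set.Ioo (0:ℝ) (1/3))
    (h : δ₁ < δ₂) : yq δ₁ < yq δ₂ := by
  obtain ⟨h10, h13⟩ := h₁
  obtain ⟨h20, h23⟩ := h₂
  have d1 : (0:ℝ) < 1 - δ₁ := by linarith
  have d2 : (0:ℝ) < 1 - δ₂ := by linarith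
  have p1pos : 0 < δ₁ / (1 - δ₁) := div_pos h10 d1
  have p2pos : 0 < δ₂ / (1 - δ₂) := div_pos h20 d2
  have p1lt : δ₁ / (1 - δ₁) < 1 := (div_lt_one d1).2 (by linarith)
  have p2lt : δ₂ / (1 - δ₂) < 1 := (div_lt_one d2).2 (by linarith)
  have hpq : δ₁ / (1 - δ₁) < δ₂ / (1 - δ₂) := by
    rw [div_lt_div_iff₀ d1 d2]; nlinarith
  have e1 : Phi (yq δ₁) = δ₁ / (1 - δ₁) := Phi_invFun p1pos p1lt
  have e2 : Phi (yq δ₂) = δ₂ / (1 - δ₂) := Phi_invFun p2pos p2lt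
  have : Phi (yq δ₁) < Phi (yq δ₂) := by rw [e1, e2]; exact hpq
  exact Phi_strictMono.lt_iff_lt.1 this

/-- `g` is strictly decreasing on `(0, 1/3)`; consequently, for the fixed point `ε₀` of `g`,
one has `δ < g δ` if and only if `δ < ε₀`. -/
theorem gfun_strictAntiOn_and_fixed_point :
    StrictAntiOn gfun (Set.Ioo (0 : ℝ) (1 / 3)) ∧
      ∀ ε₀ ∈ Set.Ioo (0 : ℝ) (1 / 3), gfun ε₀ = ε₀ →
        ∀ δ ∈ Set.Ioo (0 : ℝ) (1 / 3), (δ < gfun δ ↔ δ < ε₀) := by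
  have hanti : StrictAntiOn gfun (Set.Ioo (0 : ℝ) (1 / 3)) := by
    intro δ₁ h₁ δ₂ h₂ h
    rw [gfun_eq, gfun_eq]
    have hy := yq_lt_yq h₁ h₂ h
    have hF := strictAnti_Ffun hy
    have hF2 := Ffun_pos (yq δ₂)
    have d2 : (0:ℝ) < 1 - δ₂ := by linarith [h₂.2]
    nlinarith
  refine ⟨hanti, fun ε₀ hε₀ hfix δ hδ => ?_⟩
  constructor
  · intro hlt
    by_contra hle
    push_neg at hle
    rcases eq_or_lt_of_le hle with heq | hgt
    · rw [← heq] at hlt; rw [hfix] at hlt; exact lt_irrefl _ hlt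
    · have := hanti hε₀ hδ hgt
      rw [hfix] at this
      linarith
  · intro hlt
    have := hanti hδ hε₀ hlt
    rw [hfix] at this
    linarith
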